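/- The set of conformal Killing vector fields of the flat metric η of signature (p,q) on ℝⁿ (n = p+q ≥ 3) that are polynomial forms a Lie algebra spanned by: the translations ∂_i, the linear conformal transformations (rotations x_j∂_i - x_i∂_j and the dilation x^i∂_i), and the inversions X_i = x_jx^j ∂_i - 2x_i x^j ∂_j; in particular each X_i = x_jx^j∂_i - 2x_ix^j∂_j is a conformal Killing field, i.e. the Lie derivative of η along X_i is a multiple of η. -/

import Mathlib

open MvPolynomial

noncomputable section

/-- Polynomial symbols: polynomial functions on `T*ℝⁿ`; `Sum.inl` are the `x` variables,
`Sum.inr` the fiber variables `p`. -/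
abbrev PolySym (n : ℕ) := MvPolynomial (Fin n ⊕ Fin n) ℝ

/-- Polynomial functions on `ℝⁿ` (densities are identified with these). -/
abbrev PolyDen (n : ℕ) := MvPolynomial (Fin n) ℝ

/-- Polynomial vector fields on `ℝⁿ`, given by their components. -/
abbrev PolyVF (n : ℕ) := Fin n → PolyDen n

/-- `∂/∂x^i` on symbols. -/
def dxOp (n : ℕ) (i : Fin n) : Module.End ℝ (PolySym n) := (pderiv (Sum.inl i)).toLinearMap

/-- `∂/∂p_i` on symbols. -/
def dpOp (n : ℕ) (i : Fin n) : Module.End ℝ (PolySym n) := (pderiv (Sum.inr i)).toLinearMap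

/-- Multiplication by a symbol. -/
def mulOp (n : ℕ) (q : PolySym n) : Module.End ℝ (PolySym n) := LinearMap.mulLeft ℝ q

/-- The symbol `x^i`. -/
def xVar (n : ℕ) (i : Fin n) : PolySym n := X (Sum.inl i)

/-- The symbol `p_i`. -/
def pVar (n : ℕ) (i : Fin n) : PolySym n := X (Sum.inr i)

/-- A polynomial in `x` viewed as a symbol. -/
def liftX (n : ℕ) (f : PolyDen n) : PolySym n := rename Sum.inl f

/-- Divergence of a vector field. -/
def divVF (n : ℕ) (Xf : PolyVF n) : PolyDen n := ∑ i, pderiv i (Xf i)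

/-- Weight function computing the degree in the `p` variables. -/
def pwt (n : ℕ) : Fin n ⊕ Fin n → ℕ := Sum.elim (fun _ => 0) (fun _ => 1)

/-- Homogeneity of degree `k` in the fiber variables `p`. -/
def IsPHomog (n : ℕ) (P : PolySym n) (k : ℕ) : Prop := IsWeightedHomogeneous (pwt n) P k

/-- The weight-`δ` action `L^δ_X = X^i ∂_{x^i} - p_j (∂_{x^i} X^j) ∂_{p_i} + δ Div(X)` of a
vector field on symbols. -/
def Lop (n : ℕ) (δ : ℝ) (Xf : PolyVF n) : Module.End ℝ (PolySym n) :=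
  (∑ i, mulOp n (liftX n (Xf i)) ∘ₗ dxOp n i)
    - (∑ i, ∑ j, mulOp n (pVar n j * liftX n (pderiv i (Xf j))) ∘ₗ dpOp n i)
    + δ • mulOp n (liftX n (divVF n Xf))

/-- The action `ℓ^λ_X = X + λ Div(X)` of a vector field on `λ`-densities. -/
def ellOp (n : ℕ) (lam : ℝ) (Xf : PolyVF n) : Module.End ℝ (PolyDen n) :=
  (∑ i, LinearMap.mulLeft ℝ (Xf i) ∘ₗ (pderiv i).toLinearMap)
    + lam • LinearMap.mulLeft ℝ (divVF n Xf)

/-- Lie bracket of polynomial vector fields. -/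
def bracketVF (n : ℕ) (Xf Yf : PolyVF n) : PolyVF n :=
  fun i => ∑ j, (Xf j * pderiv j (Yf i) - Yf j * pderiv j (Xf i))
/-- The trace operator `T = η_{ij} ∂_{p_i} ∂_{p_j}` for the diagonal metric with entries `ε`. -/
def traceOp (n : ℕ) (ε : Fin n → ℝ) : Module.End ℝ (PolySym n) :=
  ∑ i, ε i • (dpOp n i ∘ₗ dpOp n i)

/-- The Euler operator `E = p_i ∂_{p_i}`. -/
def eulerOp (n : ℕ) : Module.End ℝ (PolySym n) := ∑ i, mulOp n (pVar n i) ∘ₗ dpOp n i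

/-- The quadratic symbol `R = η^{ij} p_i p_j` (the metric). -/
def rQuad (n : ℕ) (ε : Fin n → ℝ) : PolySym n := ∑ i, ε i • (pVar n i * pVar n i)

/-- Multiplication by the metric symbol `R`. -/
def rOp (n : ℕ) (ε : Fin n → ℝ) : Module.End ℝ (PolySym n) := mulOp n (rQuad n ε)

/-- The divergence operator `D = ∂_{x^i} ∂_{p_i}` on symbols. -/
def divOp (n : ℕ) : Module.End ℝ (PolySym n) := ∑ i, dxOp n i ∘ₗ dpOp n i

/-- The gradient operator `G = η^{ij} p_i ∂_{x^j}`. -/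
def gradOp (n : ℕ) (ε : Fin n → ℝ) : Module.End ℝ (PolySym n) :=
  ∑ i, ε i • (mulOp n (pVar n i) ∘ₗ dxOp n i)

/-- The translation vector field `∂_i`. -/
def transVF (n : ℕ) (i : Fin n) : PolyVF n := fun j => if j = i then 1 else 0

/-- The dilation vector field `x^i ∂_i`. -/
def dilVF (n : ℕ) : PolyVF n := fun j => X j

/-- The rotation vector field `x_j ∂_i - x_i ∂_j` for the diagonal metric `ε`. -/
def rotVF (n : ℕ) (ε : Fin n → ℝ) (i j : Fin n) : PolyVF n :=
  fun m => (if m = i then ε j • X j else 0) - (if m = j then ε i • X i else 0)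

/-- The conformal inversion `X_i = x_j x^j ∂_i - 2 x_i x^j ∂_j`. -/
def invVF (n : ℕ) (ε : Fin n → ℝ) (i : Fin n) : PolyVF n :=
  fun j => (if j = i then ∑ m, ε m • (X m * X m) else 0) - (2 * ε i) • (X i * X j)

/-- Generators of the conformal Lie algebra: translations, rotations, the dilation and the
conformal inversions. -/
def confGenSet (n : ℕ) (ε : Fin n → ℝ) : Set (PolyVF n) :=
  Set.range (transVF n) ∪ {Xf | ∃ i j, Xf = rotVF n ε i j} ∪ {dilVF n} ∪
    Set.range (invVF n ε)

/-- The Lie derivative of the flat diagonal metric `ε` along a polynomial vector field, at the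
indices `(i,j)`: `(L_X η)_{ij} = η_{mj} ∂_i X^m + η_{im} ∂_j X^m`. -/
def lieDerMetric (n : ℕ) (ε : Fin n → ℝ) (Xf : PolyVF n) (i j : Fin n) : PolyDen n :=
  ε j • pderiv i (Xf j) + ε i • pderiv j (Xf i)

/-- A polynomial vector field is conformal Killing if `L_X η = f · η` for some function `f`. -/
def IsConfKilling (n : ℕ) (ε : Fin n → ℝ) (Xf : PolyVF n) : Prop :=
  ∃ f : PolyDen n, ∀ i j, lieDerMetric n ε Xf i j = (if i = j then ε i else 0) • f



variable {n : ℕ} {ε : Fin n → ℝ}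

theorem pd_smul (l : Fin n) (c : ℝ) (p : PolyDen n) :
    pderiv l (c • p) = c • pderiv l p := (pderiv l).map_smul c p

theorem pd_X (l j : Fin n) : pderiv l (X j : PolyDen n) = if j = l then 1 else 0 := by
  classical rw [pderiv_X]; simp [Pi.single_apply]

theorem killing_trans (i : Fin n) : IsConfKilling n ε (transVF n i) := by
  refine ⟨0, fun a b => ?_⟩
  simp [lieDerMetric, transVF, apply_ite (pderiv a), apply_ite (pderiv b), pderiv_one]

theorem killing_dil : IsConfKilling n ε (dilVF n) := by
  classical
  refine ⟨2, fun a b => ?_⟩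
  simp only [lieDerMetric, dilVF, pd_X]
  split_ifs <;> (try subst_vars) <;>
  first
  | (exfalso; simp_all; done)
  | (simp only [smul_eq_C_mul, map_ofNat, map_mul, map_neg, mul_one, one_mul, mul_zero,
      zero_mul, smul_zero, zero_smul, sub_zero, zero_sub, add_zero, zero_add, neg_zero] <;> ring)

theorem killing_rot (i j : Fin n) :
    IsConfKilling n ε (rotVF n ε i j) := by
  classical
  refine ⟨0, fun a b => ?_⟩
  simp only [lieDerMetric, rotVF, map_sub, apply_ite (pderiv a), apply_ite (pderiv b),
    pd_smul, pd_X, map_zero, smul_zero]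
  split_ifs <;> (try subst_vars) <;>
  first
  | (exfalso; simp_all; done)
  | (simp only [smul_eq_C_mul, map_ofNat, map_mul, map_neg, mul_one, one_mul, mul_zero,
      zero_mul, smul_zero, zero_smul, sub_zero, zero_sub, add_zero, zero_add, neg_zero] <;> ring)

theorem pd_sumsq (l : Fin n) :
    pderiv l (∑ m, ε m • (X m * X m) : PolyDen n) = (2 * ε l) • X l := by
  classical
  rw [map_sum]
  have h : ∀ m : Fin n, pderiv l (ε m • (X m * X m) : PolyDen n) =
      if m = l then (2 * ε l) • X l else 0 := by
    intro m
    rw [pd_smul, pderiv_mul, pd_X]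
    split_ifs with hml
    · subst hml
      simp only [smul_eq_C_mul, map_mul, map_ofNat, mul_one]; ring
    · simp [hml]
  rw [Finset.sum_congr rfl (fun m _ => h m)]
  simp

theorem pd_inv (i k l : Fin n) : pderiv l (invVF n ε i k) =
    (if k = i then (2 * ε l) • X l else 0)
      - (2 * ε i) • ((if i = l then 1 else 0) * X k + X i * (if k = l then 1 else 0)) := by
  rw [invVF, map_sub, apply_ite (pderiv l), pd_smul, pderiv_mul, pd_X, pd_X, pd_sumsq, map_zero]

theorem killing_inv (i : Fin n) :
    IsConfKilling n ε (invVF n ε i) := by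
  classical
  refine ⟨(-4 * ε i) • X i, fun a b => ?_⟩
  simp only [lieDerMetric, pd_inv]
  split_ifs <;> (try subst_vars) <;>
  first
  | (exfalso; simp_all; done)
  | (simp only [smul_eq_C_mul, map_ofNat, map_mul, map_neg, mul_one, one_mul, mul_zero,
      zero_mul, smul_zero, zero_smul, sub_zero, zero_sub, add_zero, zero_add, neg_zero] <;> ring)


theorem pderiv_comm' {σ : Type} (i j : σ) (p : MvPolynomial σ ℝ) :
    pderiv i (pderiv j p) = pderiv j (pderiv i p) := by
  classical
  induction p using MvPolynomial.induction_on with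
  | C a => simp
  | add p q hp hq => simp [hp, hq]
  | mul_X p k hp =>
      simp only [pderiv_mul, map_add, hp, pderiv_X, Pi.single_apply,
        apply_ite (pderiv i), apply_ite (pderiv j), pderiv_one, map_zero, ite_self]
      ring

theorem killing_zero : IsConfKilling n ε 0 := by
  refine ⟨0, fun a b => ?_⟩
  simp [lieDerMetric]

theorem killing_add {Xf Yf : PolyVF n} (hX : IsConfKilling n ε Xf)
    (hY : IsConfKilling n ε Yf) : IsConfKilling n ε (Xf + Yf) := by
  obtain ⟨f, hf⟩ := hX; obtain ⟨g, hg⟩ := hY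
  refine ⟨f + g, fun a b => ?_⟩
  have h1 := hf a b; have h2 := hg a b
  simp only [lieDerMetric, Pi.add_apply, map_add, smul_add] at h1 h2 ⊢
  simp only [smul_eq_C_mul] at h1 h2 ⊢
  linear_combination h1 + h2

theorem killing_smul {Xf : PolyVF n} (c : ℝ) (hX : IsConfKilling n ε Xf) :
    IsConfKilling n ε (c • Xf) := by
  obtain ⟨f, hf⟩ := hX
  refine ⟨c • f, fun a b => ?_⟩
  simp only [lieDerMetric, Pi.smul_apply, pd_smul, smul_comm _ c] at *
  rw [← smul_add, hf a b, smul_comm]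

theorem killing_perj {Xf Yf : PolyVF n} {f g : PolyDen n}
    (hf : ∀ i j, lieDerMetric n ε Xf i j = (if i = j then ε i else 0) • f)
    (hg : ∀ i j, lieDerMetric n ε Yf i j = (if i = j then ε i else 0) • g)
    (a b j : Fin n) :
    ε b • pderiv a (Xf j * pderiv j (Yf b) - Yf j * pderiv j (Xf b))
      + ε a • pderiv b (Xf j * pderiv j (Yf a) - Yf j * pderiv j (Xf a))
    = (if a = b then ε a else 0) • (Xf j * pderiv j g - Yf j * pderiv j f)
      + ((if j = b then ε j else 0) • (g * pderiv a (Xf j) - f * pderiv a (Yf j))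
        + (if j = a then ε j else 0) • (g * pderiv b (Xf j) - f * pderiv b (Yf j))) := by
  have h1 := hf j a; have h2 := hf j b; have h3 := hg j a; have h4 := hg j b
  have hdx := congrArg (pderiv j) (hf a b)
  have hdy := congrArg (pderiv j) (hg a b)
  simp only [lieDerMetric] at h1 h2 h3 h4 hdx hdy
  rw [map_add, pd_smul, pd_smul, pd_smul, pderiv_comm' j a (Xf b),
    pderiv_comm' j b (Xf a)] at hdx
  rw [map_add, pd_smul, pd_smul, pd_smul, pderiv_comm' j a (Yf b),
    pderiv_comm' j b (Yf a)] at hdy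
  rw [map_sub, map_sub, pderiv_mul, pderiv_mul, pderiv_mul, pderiv_mul]
  simp only [smul_eq_C_mul] at h1 h2 h3 h4 hdx hdy ⊢
  linear_combination (pderiv a (Xf j)) * h4 - (pderiv a (Yf j)) * h2
    + (pderiv b (Xf j)) * h3 - (pderiv b (Yf j)) * h1 + Xf j * hdy - Yf j * hdx

theorem killing_bracket {Xf Yf : PolyVF n} (hX : IsConfKilling n ε Xf)
    (hY : IsConfKilling n ε Yf) : IsConfKilling n ε (bracketVF n Xf Yf) := by
  classical
  obtain ⟨f, hf⟩ := hX; obtain ⟨g, hg⟩ := hY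
  refine ⟨∑ j, (Xf j * pderiv j g - Yf j * pderiv j f), fun a b => ?_⟩
  unfold lieDerMetric bracketVF
  rw [map_sum, map_sum, Finset.smul_sum, Finset.smul_sum, ← Finset.sum_add_distrib]
  rw [Finset.sum_congr rfl (fun j _ => killing_perj hf hg a b j)]
  rw [Finset.sum_add_distrib, Finset.sum_add_distrib, ← Finset.smul_sum]
  simp only [ite_smul, zero_smul, Finset.sum_ite_eq', Finset.mem_univ, if_true]
  have hxab := hf a b; have hyab := hg a b
  simp only [lieDerMetric] at hxab hyab
  simp only [smul_eq_C_mul] at hxab hyab ⊢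
  linear_combination g * hxab - f * hyab


theorem coeff_pderiv' {σ : Type} [DecidableEq σ] (i : σ) (m : σ →₀ ℕ) (hm : m i ≠ 0)
    (p : MvPolynomial σ ℝ) :
    coeff (m - Finsupp.single i 1) (pderiv i p) = (m i : ℝ) * coeff m p := by
  induction p using MvPolynomial.induction_on' with
  | add p q hp hq => simp [hp, hq, mul_add]
  | monomial s a =>
      rw [pderiv_monomial, coeff_monomial, coeff_monomial]
      by_cases hsm : s = m
      · subst hsm; simp [mul_comm]
      · rw [if_neg hsm]
        by_cases hsi : s i = 0
        · split_ifs with h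
          · simp [hsi]
          · simp
        · rw [if_neg, mul_zero]
          intro h
          apply hsm
          have h1 : Finsupp.single i 1 ≤ s := by
            rw [Finsupp.single_le_iff]; omega
          have h2 : Finsupp.single i 1 ≤ m := by
            rw [Finsupp.single_le_iff]; omega
          calc s = s - Finsupp.single i 1 + Finsupp.single i 1 := (tsub_add_cancel_of_le h1).symm
          _ = m - Finsupp.single i 1 + Finsupp.single i 1 := by rw [h]
          _ = m := tsub_add_cancel_of_le h2

theorem eq_C_of_pderiv {σ : Type} [DecidableEq σ] (p : MvPolynomial σ ℝ)
    (h : ∀ i, pderiv i p = 0) : p = C (constantCoeff p) := by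
  ext m
  by_cases hm : m = 0
  · subst hm; simp [coeff_C, constantCoeff_eq]
  · have : ∃ i, m i ≠ 0 := by
      by_contra hc
      push_neg at hc
      exact hm (Finsupp.ext fun i => hc i)
    obtain ⟨i, hi⟩ := this
    have hco := coeff_pderiv' i m hi p
    rw [h i] at hco
    simp only [coeff_zero] at hco
    have hmi : (m i : ℝ) ≠ 0 := Nat.cast_ne_zero.mpr hi
    have hcm : coeff m p = 0 := (mul_eq_zero.mp hco.symm).resolve_left hmi
    rw [hcm, coeff_C, if_neg (fun hh => hm hh.symm)]


theorem hpull' {M : Type*} [AddCommMonoid M] (P : Prop) [Decidable P] (F : Fin n → M) :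
    (∑ b, if P then F b else 0) = if P then ∑ b, F b else 0 := by
  split_ifs <;> simp

theorem lin_decomp (co γ : Fin n → ℝ) (d : ℝ) (k : Fin n)
    (h : ∀ l, co l = γ l + if l = k then d else 0) :
    (∑ l, C (co l) * (X l : PolyDen n)) = (∑ l, γ l • (X l : PolyDen n)) + d • X k := by
  classical
  have hpt2 : ∀ l : Fin n, C (co l) * (X l:PolyDen n)
      = γ l • (X l:PolyDen n) + (if l = k then d • (X l:PolyDen n) else 0) := by
    intro l
    rw [h l, map_add, add_mul, ← smul_eq_C_mul]
    congr 1
    split_ifs with hl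
    · rw [← smul_eq_C_mul]
    · simp
  rw [Finset.sum_congr rfl fun l _ => hpt2 l, Finset.sum_add_distrib]
  congr 1
  rw [Finset.sum_ite_eq' Finset.univ k, if_pos (Finset.mem_univ k)]

theorem zq_decomp (S : Fin n → Fin n → ℝ) (u v : Fin n → ℝ) (k : Fin n)
    (hS : ∀ a b, S a b = (if k = a then u b else 0) + (if k = b then u a else 0)
      - (if a = b then v a else 0)) :
    (∑ a, ∑ b, C (S a b) * ((X a : PolyDen n) * X b))
      = (∑ m, u m • ((X k : PolyDen n) * X m)) + (∑ m, u m • ((X m : PolyDen n) * X k))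
        - ∑ m, v m • ((X m : PolyDen n) * X m) := by
  classical
  have hptS : ∀ a b : Fin n, C (S a b) * ((X a:PolyDen n) * X b)
      = (if k = a then u b • ((X a:PolyDen n) * X b) else 0)
        + (if k = b then u a • ((X a:PolyDen n) * X b) else 0)
        - (if a = b then v a • ((X a:PolyDen n) * X b) else 0) := by
    intro a b
    rw [hS a b]
    simp only [map_add, map_sub, apply_ite C, map_zero, add_mul, sub_mul, ite_mul, zero_mul,
      smul_eq_C_mul]
  rw [Finset.sum_congr rfl fun a _ => Finset.sum_congr rfl fun b _ => hptS a b]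
  have e1 : (∑ a : Fin n, ∑ b : Fin n,
      if k = a then u b • ((X a:PolyDen n) * X b) else 0)
      = ∑ m, u m • ((X k:PolyDen n) * X m) := by
    rw [Finset.sum_congr rfl fun a _ =>
      hpull' (k = a) (fun b => u b • ((X a:PolyDen n) * X b))]
    simp only [Finset.sum_ite_eq, Finset.mem_univ, if_true]
  have e2 : (∑ a : Fin n, ∑ b : Fin n,
      if k = b then u a • ((X a:PolyDen n) * X b) else 0)
      = ∑ m, u m • ((X m:PolyDen n) * X k) := by
    rw [Finset.sum_congr rfl fun a _ => Finset.sum_ite_eq Finset.univ k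
      (fun b => u a • ((X a:PolyDen n) * X b))]
    simp
  have e3 : (∑ a : Fin n, ∑ b : Fin n,
      if a = b then v a • ((X a:PolyDen n) * X b) else 0)
      = ∑ m, v m • ((X m:PolyDen n) * X m) := by
    rw [Finset.sum_congr rfl fun a _ => Finset.sum_ite_eq Finset.univ a
      (fun b => v a • ((X a:PolyDen n) * X b))]
    simp
  simp only [Finset.sum_add_distrib, Finset.sum_sub_distrib]
  rw [e1, e2, e3]

theorem q_comb (hε2 : ∀ i, ε i * ε i = 1) (bb : Fin n → ℝ) (k : Fin n) :
    (2⁻¹:ℝ) • ((∑ m, (2⁻¹ * bb m) • ((X k : PolyDen n) * X m))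
        + (∑ m, (2⁻¹ * bb m) • ((X m : PolyDen n) * X k))
        - ∑ m, (2⁻¹ * (ε k * bb k) * ε m) • ((X m : PolyDen n) * X m))
      = (-(2⁻¹ * (2⁻¹ * (ε k * bb k)))) • (∑ m, ε m • ((X m : PolyDen n) * X m))
        - ∑ m, ((-(2⁻¹ * (2⁻¹ * (ε m * bb m)))) * (2 * ε m)) • ((X m : PolyDen n) * X k) := by
  classical
  rw [smul_sub, smul_add, Finset.smul_sum, Finset.smul_sum, Finset.smul_sum, Finset.smul_sum]
  rw [← Finset.sum_add_distrib, ← Finset.sum_sub_distrib, ← Finset.sum_sub_distrib]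
  refine Finset.sum_congr rfl fun m _ => ?_
  have hCm : (C (ε m) : PolyDen n) * C (ε m) = 1 := by
    rw [← map_mul, hε2 m, map_one]
  simp only [smul_smul, smul_eq_C_mul, map_mul, map_neg, map_ofNat]
  linear_combination (-(2:PolyDen n) * C (2⁻¹:ℝ) * C (2⁻¹:ℝ) * C (bb m) * ((X m : PolyDen n) * X k)) * hCm

theorem trans_collapse (t : Fin n → ℝ) (k : Fin n) :
    (∑ m, t m • transVF n m k) = (C (t k) : PolyDen n) := by
  classical
  simp only [transVF, smul_ite, smul_zero, Finset.sum_ite_eq, Finset.mem_univ, if_true,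
    smul_eq_C_mul, mul_one]

theorem rot_collapse (r : Fin n → Fin n → ℝ) (k : Fin n) :
    (∑ i, ∑ j, r i j • rotVF n ε i j k)
      = ∑ l, ((r k l - r l k) * ε l) • (X l : PolyDen n) := by
  classical
  simp only [rotVF, smul_sub, smul_ite, smul_zero]
  rw [Finset.sum_congr rfl fun i _ => Finset.sum_sub_distrib _ _, Finset.sum_sub_distrib]
  rw [Finset.sum_congr rfl fun i _ =>
    hpull' (k = i) (fun j => r i j • (ε j • (X j : PolyDen n)))]
  simp only [Finset.sum_ite_eq, Finset.mem_univ, if_true]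
  rw [← Finset.sum_sub_distrib]
  refine Finset.sum_congr rfl fun l _ => ?_
  rw [smul_smul, smul_smul, ← sub_smul]
  ring_nf

theorem inv_collapse (cI : Fin n → ℝ) (k : Fin n) :
    (∑ m, cI m • invVF n ε m k)
      = cI k • (∑ m, ε m • ((X m : PolyDen n) * X m))
        - ∑ m, (cI m * (2 * ε m)) • ((X m : PolyDen n) * X k) := by
  classical
  simp only [invVF, smul_sub, smul_ite, smul_zero, smul_smul]
  rw [Finset.sum_sub_distrib]
  congr 1
  simp only [Finset.sum_ite_eq, Finset.mem_univ, if_true]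

section classif
variable {Xf : PolyVF n} {f : PolyDen n}
variable (hε2 : ∀ i, ε i * ε i = 1)
variable (hf : ∀ i j, ε j • pderiv i (Xf j) + ε i • pderiv j (Xf i)
    = (if i = j then ε i else 0) • f)

include hf

theorem star_eq (i j k : Fin n) :
    (2:ℝ) • (ε k • pderiv i (pderiv j (Xf k)))
      = (if k = i then ε k else 0) • pderiv j f + (if k = j then ε k else 0) • pderiv i f
        - (if i = j then ε i else 0) • pderiv k f := by
  have hd : ∀ k' i' j', ε j' • pderiv k' (pderiv i' (Xf j'))
      + ε i' • pderiv k' (pderiv j' (Xf i'))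
      = (if i' = j' then ε i' else 0) • pderiv k' f := by
    intro k' i' j'
    have h := congrArg (pderiv k') (hf i' j')
    rwa [map_add, pd_smul, pd_smul, pd_smul] at h
  have h1 := hd j k i
  rw [pderiv_comm' j k (Xf i), pderiv_comm' j i (Xf k)] at h1
  have h2 := hd i k j
  rw [pderiv_comm' i k (Xf j)] at h2
  have h3 := hd k i j
  simp only [smul_eq_C_mul, map_ofNat] at h1 h2 h3 ⊢
  linear_combination h1 + h2 - h3

theorem frel (i j k l : Fin n) :
    (if k = i then ε k else 0) • pderiv l (pderiv j f)
      - (if i = j then ε i else 0) • pderiv l (pderiv k f)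
    = (if k = l then ε k else 0) • pderiv i (pderiv j f)
      - (if l = j then ε l else 0) • pderiv i (pderiv k f) := by
  have h1 := congrArg (pderiv l) (star_eq hf i j k)
  have h2 := congrArg (pderiv i) (star_eq hf l j k)
  rw [pd_smul, pd_smul, map_sub, map_add, pd_smul, pd_smul, pd_smul] at h1
  rw [pd_smul, pd_smul, map_sub, map_add, pd_smul, pd_smul, pd_smul] at h2
  rw [pderiv_comm' l i (pderiv j (Xf k))] at h1
  rw [pderiv_comm' i l f] at h2
  simp only [smul_eq_C_mul, map_ofNat] at h1 h2 ⊢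
  linear_combination h2 - h1

theorem f_aff (h3 : 3 ≤ n) (hε2 : ∀ i, ε i * ε i = 1) (a b : Fin n) :
    pderiv a (pderiv b f) = 0 := by
  classical
  have hne : ∀ i : Fin n, ε i ≠ 0 := by
    intro i h
    have := hε2 i; rw [h] at this; norm_num at this
  have cancel : ∀ (c : ℝ) (p : PolyDen n), c ≠ 0 → c • p = 0 → p = 0 := by
    intro c p hc hp
    have h' : p = c⁻¹ • (c • p) := by rw [smul_smul, inv_mul_cancel₀ hc, one_smul]
    rw [h', hp, smul_zero]
  have rel : ∀ x y : Fin n, y ≠ x →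
      ε y • pderiv x (pderiv x f) = -(ε x • pderiv y (pderiv y f)) := by
    intro x y hxy
    have h := frel hf y x y x
    simp only [if_pos rfl, if_neg hxy, zero_smul, sub_zero, zero_sub] at h
    exact h
  by_cases hab : a = b
  · subst hab
    have hcard : 1 < (({a}ᶜ : Finset (Fin n))).card := by
      rw [Finset.card_compl]
      simp only [Finset.card_singleton, Fintype.card_fin]
      omega
    obtain ⟨c, hc, e, he, hce⟩ := Finset.one_lt_card.mp hcard
    rw [Finset.mem_compl, Finset.mem_singleton] at hc he
    set u := pderiv a (pderiv a f) with hu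
    set v := pderiv c (pderiv c f) with hv
    set w := pderiv e (pderiv e f) with hw
    have r1 : ε c • u = -(ε a • v) := rel a c hc
    have r2 : ε e • v = -(ε c • w) := rel c e (fun h => hce h.symm)
    have r3 : ε a • w = -(ε e • u) := rel e a (fun h => he h.symm)
    have huu : u = -u := by
      have e1 : u = (ε c * ε c) • u := by rw [hε2 c, one_smul]
      have e2 : v = (ε e * ε e) • v := by rw [hε2 e, one_smul]
      have e3 : w = (ε a * ε a) • w := by rw [hε2 a, one_smul]
      calc u = (ε c * ε c) • u := e1
      _ = ε c • (ε c • u) := by rw [smul_smul]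
      _ = ε c • (-(ε a • v)) := by rw [r1]
      _ = -((ε c * ε a) • v) := by rw [smul_neg, smul_smul]
      _ = -((ε c * ε a) • ((ε e * ε e) • v)) := by rw [← e2]
      _ = -((ε c * ε a * ε e) • (ε e • v)) := by rw [smul_smul, smul_smul]; ring_nf
      _ = -((ε c * ε a * ε e) • (-(ε c • w))) := by rw [r2]
      _ = (ε c * ε a * ε e * ε c) • w := by rw [smul_neg, neg_neg, smul_smul]
      _ = (ε c * ε a * ε e * ε c) • ((ε a * ε a) • w) := by rw [← e3]
      _ = (ε c * ε a * ε e * ε c * ε a) • (ε a • w) := by rw [smul_smul, smul_smul]; ring_nf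
      _ = (ε c * ε a * ε e * ε c * ε a) • (-(ε e • u)) := by rw [r3]
      _ = -((ε c * ε c * (ε a * ε a) * (ε e * ε e)) • u) := by
            rw [smul_neg, smul_smul]; ring_nf
      _ = -u := by rw [hε2 a, hε2 c, hε2 e]; norm_num
    have h2u : (2:ℝ) • u = 0 := by
      rw [two_smul]
      nth_rewrite 1 [huu]
      exact neg_add_cancel u
    exact cancel 2 u two_ne_zero h2u
  · obtain ⟨c, hc⟩ := Finset.card_pos.mp (show 0 < (({a, b}ᶜ : Finset (Fin n))).card by
      rw [Finset.card_compl]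
      have hle : ({a, b} : Finset (Fin n)).card ≤ 2 :=
        (Finset.card_insert_le _ _).trans (by simp)
      simp only [Fintype.card_fin]
      omega)
    rw [Finset.mem_compl, Finset.mem_insert, Finset.mem_singleton] at hc
    push_neg at hc
    have h := frel hf c b c a
    simp only [if_pos rfl, if_neg hc.2, if_neg hc.1, if_neg hab, zero_smul, sub_zero,
      zero_sub, neg_zero] at h
    exact cancel (ε c) _ (hne c) h

theorem X3rd (h3 : 3 ≤ n) (hε2 : ∀ i, ε i * ε i = 1) (l i j k : Fin n) :
    pderiv l (pderiv i (pderiv j (Xf k))) = 0 := by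
  have hne : ε k ≠ 0 := by
    intro h; have := hε2 k; rw [h] at this; norm_num at this
  have h := congrArg (pderiv l) (star_eq hf i j k)
  rw [pd_smul, pd_smul, map_sub, map_add, pd_smul, pd_smul, pd_smul,
    f_aff hf h3 hε2 l j, f_aff hf h3 hε2 l i, f_aff hf h3 hε2 l k] at h
  simp only [smul_zero, add_zero, sub_zero] at h
  rw [smul_smul] at h
  have hne2 : (2:ℝ) * ε k ≠ 0 := mul_ne_zero two_ne_zero hne
  have hP : pderiv l (pderiv i (pderiv j (Xf k)))
      = ((2 * ε k))⁻¹ • (((2:ℝ) * ε k) • pderiv l (pderiv i (pderiv j (Xf k)))) := by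
    rw [smul_smul, inv_mul_cancel₀ hne2, one_smul]
  rw [hP, h, smul_zero]

omit hf in
theorem cc_smul (c : ℝ) (p : PolyDen n) :
    constantCoeff (c • p) = c * constantCoeff p := by
  rw [smul_eq_C_mul, map_mul, constantCoeff_C]

theorem killing_mem_span (h3 : 3 ≤ n) (hε2 : ∀ i, ε i * ε i = 1) :
    Xf ∈ Submodule.span ℝ (confGenSet n ε) := by
  classical
  set t : Fin n → ℝ := fun k => constantCoeff (Xf k) with ht
  set Kc : Fin n → Fin n → ℝ := fun l k => constantCoeff (pderiv l (Xf k)) with hKcdef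
  set Sc : Fin n → Fin n → Fin n → ℝ :=
    fun a b k => constantCoeff (pderiv a (pderiv b (Xf k))) with hScdef
  set bb : Fin n → ℝ := fun j => constantCoeff (pderiv j f) with hbbdef
  set f0 : ℝ := constantCoeff f with hf0def
  have hXdd : ∀ a b k, pderiv a (pderiv b (Xf k)) = C (Sc a b k) :=
    fun a b k => eq_C_of_pderiv _ (fun l => X3rd hf h3 hε2 l a b k)
  have hKrel : ∀ l k, ε k * Kc l k + ε l * Kc k l = (if l = k then ε l else 0) * f0 := by
    intro l k
    have h := congrArg constantCoeff (hf l k)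
    simp only [smul_eq_C_mul, map_add, map_mul, constantCoeff_C] at h
    exact h
  have hSrel : ∀ a b k, 2 * (ε k * Sc a b k) = (if k = a then ε k else 0) * bb b
      + (if k = b then ε k else 0) * bb a - (if a = b then ε a else 0) * bb k := by
    intro a b k
    have h := congrArg constantCoeff (star_eq hf a b k)
    simp only [smul_eq_C_mul, map_add, map_sub, map_mul, map_ofNat, constantCoeff_C] at h
    exact h
  have hSsym : ∀ a b k, Sc a b k = Sc b a k := by
    intro a b k
    rw [hScdef]
    simp only []
    rw [pderiv_comm']
  set r : Fin n → Fin n → ℝ := fun i j => 2⁻¹ * (ε j * Kc j i) with hrdef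
  set cI : Fin n → ℝ := fun m => -(2⁻¹ * (2⁻¹ * (ε m * bb m))) with hcIdef
  set V : PolyVF n := (∑ m, t m • transVF n m) + (∑ i, ∑ j, r i j • rotVF n ε i j)
    + (2⁻¹ * f0) • dilVF n + ∑ m, cI m • invVF n ε m with hVdef
  have hVmem : V ∈ Submodule.span ℝ (confGenSet n ε) := by
    refine Submodule.add_mem _ (Submodule.add_mem _ (Submodule.add_mem _ ?_ ?_) ?_) ?_
    · exact Submodule.sum_mem _ fun m _ => Submodule.smul_mem _ _
        (Submodule.subset_span (Or.inl (Or.inl (Or.inl (Set.mem_range_self m)))))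
    · exact Submodule.sum_mem _ fun i _ => Submodule.sum_mem _ fun j _ =>
        Submodule.smul_mem _ _
          (Submodule.subset_span (Or.inl (Or.inl (Or.inr ⟨i, j, rfl⟩))))
    · exact Submodule.smul_mem _ _ (Submodule.subset_span (Or.inl (Or.inr rfl)))
    · exact Submodule.sum_mem _ fun m _ => Submodule.smul_mem _ _
        (Submodule.subset_span (Or.inr (Set.mem_range_self m)))
  suffices hXV : Xf = V by rw [hXV]; exact hVmem
  funext k
  set Q2 : PolyDen n := ∑ m, ε m • (X m * X m) with hQ2def
  set Zq : PolyDen n := ∑ a, ∑ b, C (Sc a b k) * (X a * X b) with hZqdef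
  set Lin : PolyDen n := ∑ l, C (Kc l k) * X l with hLindef
  set W : PolyDen n := C (t k) + Lin + (2⁻¹:ℝ) • Zq with hWdef
  -- derivatives of the pieces
  have hLin1 : ∀ c, pderiv c Lin = C (Kc c k) := by
    intro c
    rw [hLindef, map_sum]
    simp [pderiv_C_mul, pderiv_X, Pi.single_apply, mul_ite, mul_one, mul_zero,
      Finset.sum_ite_eq', Finset.mem_univ]
  have hpt : ∀ c a b : Fin n, pderiv c (C (Sc a b k) * (X a * X b))
      = (if a = c then C (Sc a b k) * X b else 0)
        + (if b = c then C (Sc a b k) * X a else 0) := by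
    intro c a b
    rw [pderiv_C_mul, pderiv_mul, pd_X, pd_X]
    split_ifs <;> ring
  have hZq1 : ∀ c, pderiv c Zq
      = (∑ e, C (Sc c e k) * X e) + (∑ e, C (Sc e c k) * X e) := by
    intro c
    rw [hZqdef, map_sum]
    rw [Finset.sum_congr rfl fun a _ => map_sum (pderiv c) _ _]
    rw [Finset.sum_congr rfl fun a _ => Finset.sum_congr rfl fun b _ => hpt c a b]
    rw [Finset.sum_congr rfl fun a _ => Finset.sum_add_distrib, Finset.sum_add_distrib]
    congr 1
    · have h1 : ∀ a : Fin n, (∑ b, if a = c then C (Sc a b k) * X b else 0)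
          = if a = c then ∑ b, C (Sc a b k) * X b else 0 := by
        intro a; split_ifs <;> simp
      rw [Finset.sum_congr rfl fun a _ => h1 a]
      simp [Finset.sum_ite_eq', Finset.mem_univ]
    · simp [Finset.sum_ite_eq', Finset.mem_univ]
  have hZq1cc : ∀ c, constantCoeff (pderiv c Zq) = 0 := by
    intro c
    rw [hZq1]
    simp
  have hZq2 : ∀ d c, pderiv d (pderiv c Zq) = (2:ℝ) • C (Sc d c k) := by
    intro d c
    rw [hZq1, map_add, map_sum, map_sum]
    simp only [pderiv_C_mul, pderiv_X, Pi.single_apply, mul_ite, mul_one, mul_zero,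
      Finset.sum_ite_eq', Finset.mem_univ, if_true]
    rw [hSsym c d k, two_smul]
  have hW1 : ∀ c, pderiv c W = C (Kc c k) + (2⁻¹:ℝ) • pderiv c Zq := by
    intro c
    rw [hWdef, map_add, map_add, pderiv_C, hLin1, pd_smul, zero_add]
  have hW2 : ∀ d c, pderiv d (pderiv c W) = C (Sc d c k) := by
    intro d c
    rw [hW1, map_add, pderiv_C, pd_smul, hZq2, zero_add, smul_smul]
    norm_num
  -- cascade
  have hXk : Xf k = W := by
    have hsub2 : ∀ d c, pderiv d (pderiv c (Xf k - W)) = 0 := by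
      intro d c
      rw [map_sub, map_sub, hXdd d c k, hW2 d c, sub_self]
    have hsub1 : ∀ c, pderiv c (Xf k - W) = 0 := by
      intro c
      have h := eq_C_of_pderiv (pderiv c (Xf k - W)) (fun d => hsub2 d c)
      have hcc : constantCoeff (pderiv c (Xf k - W)) = 0 := by
        rw [map_sub, map_sub, hW1, map_add, constantCoeff_C, cc_smul, hZq1cc, mul_zero,
          add_zero, sub_self]
      rw [h, hcc, map_zero]
    have h := eq_C_of_pderiv (Xf k - W) hsub1
    have hcc : constantCoeff (Xf k - W) = 0 := by
      rw [map_sub, hWdef, map_add, map_add, constantCoeff_C, cc_smul]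
      have hLincc : constantCoeff Lin = 0 := by rw [hLindef]; simp
      have hZqcc : constantCoeff Zq = 0 := by rw [hZqdef]; simp
      rw [hLincc, hZqcc, mul_zero, add_zero, add_zero, sub_self]
    have := h.trans (by rw [hcc, map_zero])
    exact sub_eq_zero.mp this
  -- scalar identities
  have hscalK : ∀ l, Kc l k = (r k l - r l k) * ε l + (if l = k then 2⁻¹ * f0 else 0) := by
    intro l
    have h := hKrel l k
    have h2l := hε2 l; have h2k := hε2 k
    rw [hrdef]; simp only []
    by_cases hlk : l = k
    · subst hlk; rw [if_pos rfl] at h ⊢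
      linear_combination 2⁻¹ * ε l * h + (2⁻¹ * f0 - Kc l l) * h2k
    · rw [if_neg hlk] at h ⊢
      linear_combination (2⁻¹ * ε k) * h + (-(2⁻¹) * Kc l k) * h2l
        + (-(2⁻¹) * Kc l k) * h2k
  have hscalS : ∀ a b, Sc a b k = (if k = a then 2⁻¹ * bb b else 0)
      + (if k = b then 2⁻¹ * bb a else 0)
      - (if a = b then 2⁻¹ * (ε k * bb k) * ε a else 0) := by
    intro a b
    have h := hSrel a b k
    have h2 := hε2 k
    split_ifs at h ⊢ <;>
    first
    | (exfalso; subst_vars; contradiction)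
    | linear_combination 2⁻¹ * ε k * h + (2⁻¹ * bb b + 2⁻¹ * bb a - Sc a b k) * h2
    | linear_combination 2⁻¹ * ε k * h + (2⁻¹ * bb b - Sc a b k) * h2
    | linear_combination 2⁻¹ * ε k * h + (2⁻¹ * bb a - Sc a b k) * h2
    | linear_combination 2⁻¹ * ε k * h + (- Sc a b k) * h2
  -- linear part
  have hLinEq : Lin = (∑ l, ((r k l - r l k) * ε l) • (X l : PolyDen n))
      + (2⁻¹ * f0) • (X k : PolyDen n) := by
    rw [hLindef]
    exact lin_decomp (fun l => Kc l k) (fun l => (r k l - r l k) * ε l) (2⁻¹ * f0) k hscalK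
  have hZqEq : Zq = (∑ m, (2⁻¹ * bb m) • ((X k:PolyDen n) * X m))
      + (∑ m, (2⁻¹ * bb m) • ((X m:PolyDen n) * X k))
      - ∑ m, (2⁻¹ * (ε k * bb k) * ε m) • ((X m:PolyDen n) * X m) := by
    rw [hZqdef]
    exact zq_decomp (fun a b => Sc a b k) (fun m => 2⁻¹ * bb m)
      (fun a => 2⁻¹ * (ε k * bb k) * ε a) k hscalS
  have hQcomb : (2⁻¹:ℝ) • Zq = cI k • Q2
      - ∑ m, (cI m * (2 * ε m)) • ((X m:PolyDen n) * X k) := by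
    rw [hZqEq, hQ2def, hcIdef]
    exact q_comb hε2 bb k
  have hVk : V k = C (t k) + ((∑ l, ((r k l - r l k) * ε l) • (X l:PolyDen n))
      + (2⁻¹ * f0) • (X k:PolyDen n))
      + (cI k • Q2 - ∑ m, (cI m * (2 * ε m)) • ((X m:PolyDen n) * X k)) := by
    rw [hVdef]
    simp only [Pi.add_apply, Finset.sum_apply, Pi.smul_apply]
    rw [trans_collapse t k, rot_collapse r k, inv_collapse cI k, ← hQ2def, dilVF]
    abel
  rw [hXk, hVk, hWdef, hLinEq, hQcomb]
end classif


/-- For the flat metric of signature `(p,q)` on `ℝⁿ`, `n = p + q ≥ 3`: each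
inversion `X_i = x_jx^j∂_i - 2x_ix^j∂_j` is conformal Killing; the set of polynomial conformal
Killing fields is exactly the linear span of the translations, rotations, dilation and
inversions; and this set is closed under the Lie bracket, hence is a Lie algebra. -/
theorem conformal_killing_fields_classification (p q n : ℕ) (hn : n = p + q) (h3 : 3 ≤ n)
    (ε : Fin n → ℝ) (hε : ∀ i, ε i = if (i : ℕ) < p then 1 else -1) :
    (∀ i, IsConfKilling n ε (invVF n ε i)) ∧
    {Xf : PolyVF n | IsConfKilling n ε Xf}
      = ↑(Submodule.span ℝ (confGenSet n ε)) ∧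
    (∀ Xf Yf : PolyVF n, IsConfKilling n ε Xf → IsConfKilling n ε Yf →
      IsConfKilling n ε (bracketVF n Xf Yf)) := by
  have hε2 : ∀ i, ε i * ε i = 1 := by
    intro i; rw [hε i]; split_ifs <;> norm_num
  refine ⟨fun i => killing_inv i, ?_, fun Xf Yf hX hY => killing_bracket hX hY⟩
  ext Xf
  simp only [Set.mem_setOf_eq, SetLike.mem_coe]
  constructor
  · intro hK
    obtain ⟨f, hfK⟩ := hK
    have hf' : ∀ i j, ε j • pderiv i (Xf j) + ε i • pderiv j (Xf i)
        = (if i = j then ε i else 0) • f := by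
      intro i j
      have h := hfK i j
      rwa [lieDerMetric] at h
    exact killing_mem_span hf' h3 hε2
  · intro hs
    refine Submodule.span_induction ?_ killing_zero
      (fun x y _ _ hx hy => killing_add hx hy)
      (fun c x _ hx => killing_smul c hx) hs
    intro g hg
    rcases hg with (((⟨m, rfl⟩ | ⟨i, j, rfl⟩) | rfl) | ⟨m, rfl⟩)
    · exact killing_trans m
    · exact killing_rot i j
    · exact killing_dil
    · exact killing_inv m
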